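/- Let μ be a Borel measure on ℝⁿ with μ(B(x,r)) ≲ r^m, let λ > 2, 0 < α ≤ m(λ−2)/2, and let s_t be a kernel with size bound |s_t(x,y)| ≲ t^α/(t+|x−y|)^{m+α}. Define θ_t f(y) = ∫ s_t(y,z) f(z) dμ(z). Then for every x ∈ ℝⁿ and t > 0, (∫_{ℝⁿ} (t/(t+|x−y|))^{mλ} |θ_t f(y)|² dμ(y)/t^m)^{1/2} ≲ M_μ f(x). -/

import Mathlib

open MeasureTheory
open scoped ENNReal NNReal

noncomputable section

/-- The centered Hardy–Littlewood maximal function with respect to `μ`. -/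
def centeredMaximal {n : ℕ} (μ : Measure (Fin n → ℝ)) (f : (Fin n → ℝ) → ℂ)
    (x : Fin n → ℝ) : ℝ≥0∞ :=
  ⨆ (r : ℝ) (_ : 0 < r),
    (μ (Metric.ball x r))⁻¹ * ∫⁻ z in Metric.ball x r, ‖f z‖₊ ∂μ

namespace SqAux

lemma two_rpow_pos (a : ℝ) : (0:ℝ) < (2:ℝ) ^ a := Real.rpow_pos_of_pos two_pos a

/-- geometric series constant -/
def Kg (δ : ℝ) : ℝ≥0∞ := ∑' k : ℕ, ENNReal.ofReal ((2:ℝ) ^ (-(k:ℝ) * δ))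

lemma Kg_ne_top {δ : ℝ} (hδ : 0 < δ) : Kg δ ≠ ∞ := by
  have h1 : ∀ k : ℕ, ENNReal.ofReal ((2:ℝ) ^ (-(k:ℝ) * δ))
      = ENNReal.ofReal ((2:ℝ) ^ (-δ)) ^ k := by
    intro k
    rw [← ENNReal.ofReal_pow (le_of_lt (two_rpow_pos _))]
    congr 1
    rw [← Real.rpow_natCast ((2:ℝ) ^ (-δ)) k, ← Real.rpow_mul (by norm_num : (0:ℝ) ≤ 2)]
    ring_nf
  rw [Kg]
  simp_rw [h1]
  rw [ENNReal.tsum_geometric]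
  have hlt : ENNReal.ofReal ((2:ℝ) ^ (-δ)) < 1 := by
    rw [show (1:ℝ≥0∞) = ENNReal.ofReal 1 by simp]
    exact ENNReal.ofReal_lt_ofReal_iff (by norm_num) |>.2
      (Real.rpow_lt_one_of_one_lt_of_neg (by norm_num) (by linarith))
  simp only [ne_eq, ENNReal.inv_eq_top]
  intro h
  rw [tsub_eq_zero_iff_le] at h
  exact absurd h (not_le.2 hlt)

lemma annuli {n : ℕ} (μ : Measure (Fin n → ℝ)) (g : (Fin n → ℝ) → ℝ≥0∞)
    (hg : AEMeasurable g μ) (x : Fin n → ℝ) (R e : ℝ) (hR : 0 < R) (he : 0 ≤ e) :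
    ∫⁻ y, ENNReal.ofReal ((R / (R + ‖x - y‖)) ^ e) * g y ∂μ ≤
      ∑' k : ℕ, ENNReal.ofReal ((2:ℝ) ^ (-(k:ℝ) * e)) *
        ∫⁻ y in Metric.ball x ((2:ℝ) ^ (k+1) * R), g y ∂μ := by
  have hpt : ∀ y, ENNReal.ofReal ((R / (R + ‖x - y‖)) ^ e) * g y ≤
      ∑' k : ℕ, ENNReal.ofReal ((2:ℝ) ^ (-(k:ℝ) * e)) *
        (Metric.ball x ((2:ℝ) ^ (k+1) * R)).indicator g y := by
    intro y
    set D : ℝ := ‖x - y‖ with hD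
    have hD0 : 0 ≤ D := norm_nonneg _
    have hex : ∃ k : ℕ, D < (2:ℝ) ^ (k+1) * R := by
      obtain ⟨N, hN⟩ := exists_nat_gt (D / R)
      refine ⟨N, ?_⟩
      have h1 : D < N * R := by
        have := (div_lt_iff₀ hR).1 hN
        linarith
      have h2 : (N:ℝ) ≤ (2:ℝ) ^ (N+1) := by
        have hnn := Nat.lt_two_pow_self (n := N)
        have h4 : (N:ℝ) < (2:ℝ) ^ N := by exact_mod_cast hnn
        have h5 : (2:ℝ) ^ N ≤ (2:ℝ) ^ (N+1) :=
          pow_le_pow_right₀ (by norm_num : (1:ℝ) ≤ 2) (Nat.le_succ N)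
        linarith
      nlinarith
    set k₀ := Nat.find hex with hk₀
    have hmem : y ∈ Metric.ball x ((2:ℝ) ^ (k₀+1) * R) := by
      rw [Metric.mem_ball, dist_comm, dist_eq_norm]
      exact Nat.find_spec hex
    have hbound : (R / (R + D)) ^ e ≤ (2:ℝ) ^ (-(k₀:ℝ) * e) := by
      have hbase : R / (R + D) ≤ (2:ℝ) ^ (-(k₀:ℝ)) := by
        rcases Nat.eq_zero_or_pos k₀ with h0 | hpos
        · rw [h0]
          simp only [Nat.cast_zero, neg_zero, Real.rpow_zero]
          rw [div_le_one (by linarith)]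
          linarith
        · obtain ⟨j, hj⟩ := Nat.exists_eq_succ_of_ne_zero hpos.ne'
          have hnt : ¬ (D < (2:ℝ) ^ (j+1) * R) := Nat.find_min hex (by omega)
          push_neg at hnt
          have hjk : (2:ℝ) ^ (j+1) = (2:ℝ) ^ (k₀:ℕ) := by rw [hj]
          rw [hjk] at hnt
          have hpow : (0:ℝ) < (2:ℝ) ^ (k₀:ℕ) := pow_pos (by norm_num) _
          have h1 : R / (R + D) ≤ R / ((2:ℝ) ^ (k₀:ℕ) * R) := by
            apply div_le_div_of_nonneg_left hR.le (by positivity)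
            nlinarith
          have h2 : R / ((2:ℝ) ^ (k₀:ℕ) * R) = (2:ℝ) ^ (-(k₀:ℝ)) := by
            rw [Real.rpow_neg (by norm_num), Real.rpow_natCast]
            field_simp
          linarith [h1, h2 ▸ h1]
      calc (R / (R + D)) ^ e ≤ ((2:ℝ) ^ (-(k₀:ℝ))) ^ e :=
            Real.rpow_le_rpow (by positivity) hbase he
        _ = (2:ℝ) ^ (-(k₀:ℝ) * e) := by
            rw [← Real.rpow_mul (by norm_num)]
      
    calc ENNReal.ofReal ((R / (R + D)) ^ e) * g y
        ≤ ENNReal.ofReal ((2:ℝ) ^ (-(k₀:ℝ) * e)) *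
            (Metric.ball x ((2:ℝ) ^ (k₀+1) * R)).indicator g y := by
          rw [Set.indicator_of_mem hmem]
          exact mul_le_mul_left (ENNReal.ofReal_le_ofReal hbound) _
      _ ≤ _ := ENNReal.le_tsum k₀
  calc ∫⁻ y, ENNReal.ofReal ((R / (R + ‖x - y‖)) ^ e) * g y ∂μ
      ≤ ∫⁻ y, ∑' k : ℕ, ENNReal.ofReal ((2:ℝ) ^ (-(k:ℝ) * e)) *
          (Metric.ball x ((2:ℝ) ^ (k+1) * R)).indicator g y ∂μ := lintegral_mono hpt
    _ = ∑' k : ℕ, ∫⁻ y, ENNReal.ofReal ((2:ℝ) ^ (-(k:ℝ) * e)) *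
          (Metric.ball x ((2:ℝ) ^ (k+1) * R)).indicator g y ∂μ := by
        apply lintegral_tsum
        intro k
        exact ((hg.indicator measurableSet_ball).const_mul _)
    _ = ∑' k : ℕ, ENNReal.ofReal ((2:ℝ) ^ (-(k:ℝ) * e)) *
          ∫⁻ y in Metric.ball x ((2:ℝ) ^ (k+1) * R), g y ∂μ := by
        congr 1
        ext k
        rw [lintegral_const_mul' _ _ ENNReal.ofReal_ne_top]
        congr 1
        exact lintegral_indicator measurableSet_ball g

lemma sum_bound (C R m δ : ℝ) (hC : 0 < C) (hR : 0 < R) (hm : 0 < m) (hδ : 0 < δ)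
    (M : ℝ≥0∞) (ν : ℕ → ℝ≥0∞)
    (hν : ∀ k : ℕ, ν k ≤ ENNReal.ofReal (C * ((2:ℝ) ^ (k+1) * R) ^ m) * M) :
    ∑' k : ℕ, ENNReal.ofReal ((2:ℝ) ^ (-(k:ℝ) * (m+δ))) * ν k ≤
      ENNReal.ofReal (C * 2 ^ m * R ^ m) * Kg δ * M := by
  have key : ∀ k : ℕ, (2:ℝ) ^ (-(k:ℝ) * (m+δ)) * (C * ((2:ℝ) ^ (k+1) * R) ^ m)
      = (C * 2 ^ m * R ^ m) * (2:ℝ) ^ (-(k:ℝ) * δ) := by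
    intro k
    have h1 : ((2:ℝ) ^ (k+1) * R) ^ m = (2:ℝ) ^ (((k:ℝ)+1) * m) * R ^ m := by
      rw [Real.mul_rpow (by positivity) hR.le]
      congr 1
      rw [← Real.rpow_natCast (2:ℝ) (k+1), ← Real.rpow_mul (by norm_num)]
      push_cast; ring_nf
    have h2 : (2:ℝ) ^ (-(k:ℝ) * (m+δ)) * (2:ℝ) ^ (((k:ℝ)+1) * m)
        = (2:ℝ) ^ m * (2:ℝ) ^ (-(k:ℝ) * δ) := by
      rw [← Real.rpow_add (by norm_num), ← Real.rpow_add (by norm_num)]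
      ring_nf
    calc (2:ℝ) ^ (-(k:ℝ) * (m+δ)) * (C * ((2:ℝ) ^ (k+1) * R) ^ m)
        = C * R ^ m * ((2:ℝ) ^ (-(k:ℝ) * (m+δ)) * (2:ℝ) ^ (((k:ℝ)+1) * m)) := by
          rw [h1]; ring
      _ = C * R ^ m * ((2:ℝ) ^ m * (2:ℝ) ^ (-(k:ℝ) * δ)) := by rw [h2]
      _ = (C * 2 ^ m * R ^ m) * (2:ℝ) ^ (-(k:ℝ) * δ) := by ring
  calc ∑' k : ℕ, ENNReal.ofReal ((2:ℝ) ^ (-(k:ℝ) * (m+δ))) * ν k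
      ≤ ∑' k : ℕ, ENNReal.ofReal (C * 2 ^ m * R ^ m) *
          (ENNReal.ofReal ((2:ℝ) ^ (-(k:ℝ) * δ)) * M) := by
        apply ENNReal.tsum_le_tsum
        intro k
        calc ENNReal.ofReal ((2:ℝ) ^ (-(k:ℝ) * (m+δ))) * ν k
            ≤ ENNReal.ofReal ((2:ℝ) ^ (-(k:ℝ) * (m+δ))) *
                (ENNReal.ofReal (C * ((2:ℝ) ^ (k+1) * R) ^ m) * M) :=
              mul_le_mul_right (hν k) _
          _ = ENNReal.ofReal ((2:ℝ) ^ (-(k:ℝ) * (m+δ)) * (C * ((2:ℝ) ^ (k+1) * R) ^ m)) * M := by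
              rw [← mul_assoc, ← ENNReal.ofReal_mul (by positivity)]
          _ = ENNReal.ofReal ((C * 2 ^ m * R ^ m) * (2:ℝ) ^ (-(k:ℝ) * δ)) * M := by rw [key k]
          _ = ENNReal.ofReal (C * 2 ^ m * R ^ m) *
                (ENNReal.ofReal ((2:ℝ) ^ (-(k:ℝ) * δ)) * M) := by
              rw [ENNReal.ofReal_mul (by positivity : (0:ℝ) ≤ C * 2 ^ m * R ^ m), mul_assoc]
    _ = ENNReal.ofReal (C * 2 ^ m * R ^ m) * Kg δ * M := by
        simp_rw [← mul_assoc]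
        rw [ENNReal.tsum_mul_right, ENNReal.tsum_mul_left, Kg]

lemma setLintegral_le_mul_maximal {n : ℕ} (μ : Measure (Fin n → ℝ))
    (f : (Fin n → ℝ) → ℂ) (x : Fin n → ℝ) (r : ℝ) (hr : 0 < r)
    (hfin : μ (Metric.ball x r) ≠ ∞) :
    ∫⁻ z in Metric.ball x r, ‖f z‖₊ ∂μ ≤
      μ (Metric.ball x r) * centeredMaximal μ f x := by
  by_cases h0 : μ (Metric.ball x r) = 0
  · rw [setLIntegral_measure_zero _ _ h0]
    exact zero_le
  · have hM : (μ (Metric.ball x r))⁻¹ * ∫⁻ z in Metric.ball x r, ‖f z‖₊ ∂μ ≤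
        centeredMaximal μ f x :=
      le_iSup₂ (f := fun (r : ℝ) (_ : 0 < r) =>
        (μ (Metric.ball x r))⁻¹ * ∫⁻ z in Metric.ball x r, ‖f z‖₊ ∂μ) r hr
    calc ∫⁻ z in Metric.ball x r, ‖f z‖₊ ∂μ
        = μ (Metric.ball x r) * ((μ (Metric.ball x r))⁻¹ *
            ∫⁻ z in Metric.ball x r, ‖f z‖₊ ∂μ) := by
          rw [← mul_assoc, ENNReal.mul_inv_cancel h0 hfin, one_mul]
      _ ≤ _ := mul_le_mul_right hM _

lemma frac_id {T D : ℝ} (hT : 0 < T) (hD : 0 ≤ D) (m α : ℝ) :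
    T ^ α / (T + D) ^ (m + α) = T ^ (-m) * (T / (T + D)) ^ (m + α) := by
  have hTD : 0 < T + D := by linarith
  rw [Real.div_rpow hT.le hTD.le, Real.rpow_neg hT.le, Real.rpow_add hT]
  have h1 : (T:ℝ) ^ m ≠ 0 := (Real.rpow_pos_of_pos hT m).ne'
  field_simp

lemma ker_transfer {C m α t A B E : ℝ} (hC : 0 ≤ C) (hm : 0 ≤ m) (hα : 0 ≤ α)
    (ht : 0 < t) (hA : 0 ≤ A) (hB : 0 ≤ B) (hE : 0 ≤ E) (hEle : E ≤ B + A) :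
    C * t ^ α / (t + A) ^ (m + α) ≤
      2 ^ (m + α) * (((t + B) / t) ^ m * (C * (t + B) ^ α / ((t + B) + E) ^ (m + α))) := by
  set T : ℝ := t + B with hTdef
  have hT : 0 < T := by positivity
  have htT : t ≤ T := by simp [hTdef]; linarith
  have h1 : T + E ≤ 2 * ((T / t) * (t + A)) := by
    have hge : 1 ≤ T / t := (one_le_div ht).2 htT
    have hq1 : (T / t) * (t + A) = T + (T / t) * A := by field_simp
    nlinarith
  have h2 : (T + E) ^ (m + α) ≤ 2 ^ (m + α) * ((T / t) ^ (m + α) * (t + A) ^ (m + α)) := by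
    calc (T + E) ^ (m + α) ≤ (2 * ((T / t) * (t + A))) ^ (m + α) :=
          Real.rpow_le_rpow (by positivity) h1 (by positivity)
      _ = 2 ^ (m + α) * ((T / t) ^ (m + α) * (t + A) ^ (m + α)) := by
          rw [Real.mul_rpow (by norm_num) (by positivity),
            Real.mul_rpow (by positivity) (by positivity)]
  have key : (T / t) ^ (m + α) * t ^ α = (T / t) ^ m * T ^ α := by
    have hu : 0 < T / t := div_pos hT ht
    rw [Real.rpow_add hu, mul_assoc]
    congr 1
    rw [Real.div_rpow hT.le ht.le]
    have := (Real.rpow_pos_of_pos ht α).ne'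
    field_simp
  have hrhs : 2 ^ (m + α) * ((T / t) ^ m * (C * T ^ α / (T + E) ^ (m + α)))
      = (2 ^ (m + α) * (T / t) ^ m * (C * T ^ α)) / (T + E) ^ (m + α) := by ring
  rw [hrhs, div_le_div_iff₀ (by positivity) (by positivity)]
  have h3 : C * t ^ α * (T + E) ^ (m + α) ≤
      C * t ^ α * (2 ^ (m + α) * ((T / t) ^ (m + α) * (t + A) ^ (m + α))) :=
    mul_le_mul_of_nonneg_left h2 (by positivity)
  calc C * t ^ α * (T + E) ^ (m + α)
      ≤ C * t ^ α * (2 ^ (m + α) * ((T / t) ^ (m + α) * (t + A) ^ (m + α))) := h3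
    _ = 2 ^ (m + α) * (T / t) ^ m * (C * T ^ α) * (t + A) ^ (m + α) := by
        linear_combination (2 ^ (m + α) * C * (t + A) ^ (m + α)) * key

lemma case1_bound {t D B m α β : ℝ} (ht : 0 < t) (hD : 0 ≤ D) (hB0 : 0 ≤ B)
    (hB : D / 2 ≤ B) (hm : 0 ≤ m) (hα : 0 ≤ α) (hαβ : α ≤ β) :
    (t / (t + B)) ^ (m + β) ≤ 2 ^ (m + β) * (t / (t + D)) ^ (m + α) := by
  have e1 : t / (t + B) ≤ t / (t + D / 2) :=
    div_le_div_of_nonneg_left ht.le (by linarith) (by linarith)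
  have hu1 : t / (t + D / 2) ≤ 1 := by
    rw [div_le_one (by linarith)]; linarith
  have e2 : (t / (t + B)) ^ (m + β) ≤ (t / (t + D / 2)) ^ (m + β) :=
    Real.rpow_le_rpow (by positivity) e1 (by linarith)
  have e3 : (t / (t + D / 2)) ^ (m + β) ≤ (t / (t + D / 2)) ^ (m + α) :=
    Real.rpow_le_rpow_of_exponent_ge (by positivity) hu1 (by linarith)
  have e4 : t / (t + D / 2) ≤ 2 * (t / (t + D)) := by
    have h24 : 2 * (t / (t + D)) = 2 * t / (t + D) := by ring
    rw [h24, div_le_div_iff₀ (by linarith) (by linarith)]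
    nlinarith
  have e5 : (t / (t + D / 2)) ^ (m + α) ≤ (2 * (t / (t + D))) ^ (m + α) :=
    Real.rpow_le_rpow (by positivity) e4 (by linarith)
  have e6 : (2 * (t / (t + D))) ^ (m + α) = 2 ^ (m + α) * (t / (t + D)) ^ (m + α) :=
    Real.mul_rpow (by norm_num) (by positivity)
  have e7 : (2:ℝ) ^ (m + α) ≤ 2 ^ (m + β) :=
    Real.rpow_le_rpow_of_exponent_le (by norm_num) (by linarith)
  have e8 : (0:ℝ) ≤ (t / (t + D)) ^ (m + α) := Real.rpow_nonneg (by positivity) _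
  nlinarith

lemma case2_bound {C t D A m α : ℝ} (hC : 0 ≤ C) (ht : 0 < t) (hD : 0 ≤ D)
    (hA : D / 2 ≤ A) (hm : 0 ≤ m) (hα : 0 ≤ α) :
    C * t ^ α / (t + A) ^ (m + α) ≤ C * 2 ^ (m + α) * (t ^ α / (t + D) ^ (m + α)) := by
  have hA0 : 0 ≤ A := by linarith
  have g1 : (t + D / 2) ^ (m + α) ≤ (t + A) ^ (m + α) :=
    Real.rpow_le_rpow (by linarith) (by linarith) (by linarith)
  have g2 : (t + D) ^ (m + α) ≤ 2 ^ (m + α) * (t + D / 2) ^ (m + α) := by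
    calc (t + D) ^ (m + α) ≤ (2 * (t + D / 2)) ^ (m + α) :=
          Real.rpow_le_rpow (by linarith) (by linarith) (by linarith)
      _ = _ := Real.mul_rpow (by norm_num) (by linarith)
  have hr : C * 2 ^ (m + α) * (t ^ α / (t + D) ^ (m + α))
      = C * 2 ^ (m + α) * t ^ α / (t + D) ^ (m + α) := by ring
  rw [hr, div_le_div_iff₀ (by positivity) (by positivity)]
  calc C * t ^ α * (t + D) ^ (m + α)
      ≤ C * t ^ α * (2 ^ (m + α) * (t + D / 2) ^ (m + α)) :=
        mul_le_mul_of_nonneg_left g2 (by positivity)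
    _ ≤ C * t ^ α * (2 ^ (m + α) * (t + A) ^ (m + α)) :=
        mul_le_mul_of_nonneg_left (mul_le_mul_of_nonneg_left g1 (by positivity))
          (by positivity)
    _ = C * 2 ^ (m + α) * t ^ α * (t + A) ^ (m + α) := by ring

lemma lemB {n : ℕ} (μ : Measure (Fin n → ℝ)) (C m δ R : ℝ) (hC : 0 < C) (hm : 0 < m)
    (hδ : 0 < δ) (hR : 0 < R)
    (hμ : ∀ (c : Fin n → ℝ) (r : ℝ), 0 < r →
      μ (Metric.ball c r) ≤ ENNReal.ofReal (C * r ^ m))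
    (c : Fin n → ℝ) :
    ∫⁻ y, ENNReal.ofReal ((R / (R + ‖c - y‖)) ^ (m + δ)) ∂μ ≤
      ENNReal.ofReal (C * 2 ^ m * R ^ m) * Kg δ := by
  have h := annuli μ (fun _ => (1:ℝ≥0∞)) aemeasurable_const c R (m+δ) hR (by positivity)
  simp only [mul_one, setLIntegral_one] at h
  refine h.trans ?_
  have h2 := sum_bound C R m δ hC hR hm hδ 1
    (fun k => μ (Metric.ball c ((2:ℝ)^(k+1) * R)))
    (fun k => by
      rw [mul_one]
      exact hμ c _ (by positivity))
  simpa using h2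

lemma lemA {n : ℕ} (μ : Measure (Fin n → ℝ)) (C m δ R : ℝ) (hC : 0 < C) (hm : 0 < m)
    (hδ : 0 < δ) (hR : 0 < R)
    (hμ : ∀ (c : Fin n → ℝ) (r : ℝ), 0 < r →
      μ (Metric.ball c r) ≤ ENNReal.ofReal (C * r ^ m))
    (f : (Fin n → ℝ) → ℂ) (hfm : AEMeasurable (fun z => (‖f z‖₊ : ℝ≥0∞)) μ)
    (x : Fin n → ℝ) :
    ∫⁻ z, ENNReal.ofReal ((R / (R + ‖x - z‖)) ^ (m + δ)) * ‖f z‖₊ ∂μ ≤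
      ENNReal.ofReal (C * 2 ^ m * R ^ m) * Kg δ * centeredMaximal μ f x := by
  have h := annuli μ (fun z => (‖f z‖₊ : ℝ≥0∞)) hfm x R (m+δ) hR (by positivity)
  refine h.trans ?_
  refine sum_bound C R m δ hC hR hm hδ (centeredMaximal μ f x)
    (fun k => ∫⁻ z in Metric.ball x ((2:ℝ)^(k+1) * R), ‖f z‖₊ ∂μ) (fun k => ?_)
  have hpos : (0:ℝ) < (2:ℝ)^(k+1) * R := by positivity
  have hfin : μ (Metric.ball x ((2:ℝ)^(k+1) * R)) ≠ ∞ :=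
    ne_top_of_le_ne_top ENNReal.ofReal_ne_top (hμ x _ hpos)
  exact (setLintegral_le_mul_maximal μ f x _ hpos hfin).trans
    (mul_le_mul_left (hμ x _ hpos) _)

end SqAux

set_option maxHeartbeats 2000000 in
/-- Pointwise bound of the localized `g_λ^*`-integrand by the maximal function:
if `μ(B(x,r)) ≲ r^m`, `λ > 2`, `0 < α ≤ m(λ−2)/2` and the kernel `s_t` satisfies the
size condition, then
`(∫ (t/(t+|x−y|))^{mλ} |θ_t f(y)|² dμ(y)/t^m)^{1/2} ≲ M_μ f(x)`. -/
theorem square_integrand_le_maximal (n : ℕ) (μ : Measure (Fin n → ℝ))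
    (m α lam C : ℝ) (hm : 0 < m) (hlam : 2 < lam)
    (hα0 : 0 < α) (hα : α ≤ m * (lam - 2) / 2) (hC : 0 < C)
    (hμ : ∀ (x : Fin n → ℝ) (r : ℝ), 0 < r →
      μ (Metric.ball x r) ≤ ENNReal.ofReal (C * r ^ m))
    (s : ℝ → (Fin n → ℝ) → (Fin n → ℝ) → ℂ)
    (hs : ∀ (t : ℝ) (x y : Fin n → ℝ), 0 < t →
      ‖s t x y‖ ≤ C * t ^ α / (t + ‖x - y‖) ^ (m + α)) :
    ∃ C' : ℝ, 0 < C' ∧ ∀ (f : (Fin n → ℝ) → ℂ), LocallyIntegrable f μ →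
      (∀ (t : ℝ) (y : Fin n → ℝ), 0 < t → Integrable (fun z => s t y z * f z) μ) →
      ∀ (x : Fin n → ℝ) (t : ℝ), 0 < t →
        ((∫⁻ y, ENNReal.ofReal ((t / (t + ‖x - y‖)) ^ (m * lam)) *
            (‖∫ z, s t y z * f z ∂μ‖₊ : ℝ≥0∞) ^ 2 ∂μ) *
          (ENNReal.ofReal (t ^ m))⁻¹) ^ (1 / 2 : ℝ) ≤
          ENNReal.ofReal C' * centeredMaximal μ f x := by
  classical
  set β : ℝ := m * (lam - 2) with hβdef
  have hβ : 0 < β := mul_pos hm (by linarith)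
  have hαβ : α ≤ β := by linarith
  have hKgα := SqAux.Kg_ne_top hα0
  have hKgβ := SqAux.Kg_ne_top hβ
  set K₁ : ℝ≥0∞ := ENNReal.ofReal ((2:ℝ)^(m+α) * C^2 * 2^m) * SqAux.Kg α with hK₁def
  set K₂ : ℝ≥0∞ := ENNReal.ofReal ((2:ℝ)^(m+β) * (C^2 * 2^m)) * SqAux.Kg α
      + ENNReal.ofReal (C^2 * (2:ℝ)^(m+α) * 2^m) * SqAux.Kg β with hK₂def
  set K₃ : ℝ≥0∞ := K₁ * K₂ * (ENNReal.ofReal (C * 2^m) * SqAux.Kg α) with hK₃def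
  have hK₁top : K₁ ≠ ∞ := ENNReal.mul_ne_top ENNReal.ofReal_ne_top hKgα
  have hK₂top : K₂ ≠ ∞ :=
    ENNReal.add_ne_top.2
      ⟨ENNReal.mul_ne_top ENNReal.ofReal_ne_top hKgα,
       ENNReal.mul_ne_top ENNReal.ofReal_ne_top hKgβ⟩
  have hK₃top : K₃ ≠ ∞ := ENNReal.mul_ne_top (ENNReal.mul_ne_top hK₁top hK₂top)
      (ENNReal.mul_ne_top ENNReal.ofReal_ne_top hKgα)
  have hKhalf : K₃ ^ (1/2:ℝ) ≠ ∞ := ENNReal.rpow_ne_top_of_nonneg (by norm_num) hK₃top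
  refine ⟨(K₃ ^ (1/2:ℝ)).toReal + 1, by positivity, ?_⟩
  have hC'pos : (0:ℝ) < (K₃ ^ (1/2:ℝ)).toReal + 1 := by positivity
  have hKC' : K₃ ^ (1/2:ℝ) ≤ ENNReal.ofReal ((K₃ ^ (1/2:ℝ)).toReal + 1) := by
    conv_lhs => rw [← ENNReal.ofReal_toReal hKhalf]
    exact ENNReal.ofReal_le_ofReal (le_add_of_nonneg_right zero_le_one)
  intro f hf hint x t ht
  -- σ-finiteness
  have hσ : SigmaFinite μ := by
    refine ⟨⟨⟨fun k => Metric.ball 0 (k+1), fun _ => trivial, fun k => ?_, ?_⟩⟩⟩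
    · exact lt_of_le_of_lt (hμ 0 (k+1) (by positivity)) ENNReal.ofReal_lt_top
    · apply Set.eq_univ_of_forall
      intro y
      obtain ⟨N, hN⟩ := exists_nat_gt (dist y (0 : Fin n → ℝ))
      refine Set.mem_iUnion.2 ⟨N, Metric.mem_ball.2 ?_⟩
      push_cast
      linarith
  haveI := hσ
  set M : ℝ≥0∞ := centeredMaximal μ f x with hMdef
  by_cases hMtop : M = ∞
  · rw [hMtop, ENNReal.mul_top (ENNReal.ofReal_pos.2 hC'pos).ne']
    exact le_top
  have hfm : AEMeasurable (fun z => (‖f z‖₊ : ℝ≥0∞)) μ := hf.aestronglyMeasurable.enorm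
  have hT : ∀ y : Fin n → ℝ, 0 < t + ‖x - y‖ :=
    fun y => add_pos_of_pos_of_nonneg ht (norm_nonneg _)
  have hK₁M : K₁ * M ≠ ∞ := ENNReal.mul_ne_top hK₁top hMtop
  -- measurability of the kernels
  have hPm : Measurable fun y : Fin n → ℝ =>
      ENNReal.ofReal ((t / (t + ‖x - y‖)) ^ (m + β)) := by
    have hc : Continuous fun y : Fin n → ℝ => (t / (t + ‖x - y‖)) ^ (m + β) := by
      apply Continuous.rpow_const
      · exact continuous_const.div
          (continuous_const.add (continuous_const.sub continuous_id).norm)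
          (fun y => (hT y).ne')
      · intro y; right; positivity
    exact (ENNReal.continuous_ofReal.comp hc).measurable
  have hqm : Measurable fun p : (Fin n → ℝ) × (Fin n → ℝ) =>
      ENNReal.ofReal (C * t ^ α / (t + ‖p.1 - p.2‖) ^ (m + α)) := by
    have hc : Continuous fun p : (Fin n → ℝ) × (Fin n → ℝ) =>
        C * t ^ α / (t + ‖p.1 - p.2‖) ^ (m + α) := by
      apply Continuous.div continuous_const
      · apply Continuous.rpow_const
        · exact continuous_const.add (continuous_fst.sub continuous_snd).norm
        · intro p; left
          exact (add_pos_of_pos_of_nonneg ht (norm_nonneg _)).ne'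
      · intro p
        exact (Real.rpow_pos_of_pos (add_pos_of_pos_of_nonneg ht (norm_nonneg _)) _).ne'
    exact (ENNReal.continuous_ofReal.comp hc).measurable
  have hqym : ∀ z, Measurable fun y : Fin n → ℝ =>
      ENNReal.ofReal (C * t ^ α / (t + ‖y - z‖) ^ (m + α)) := by
    intro z
    have hc : Continuous fun y : Fin n → ℝ =>
        C * t ^ α / (t + ‖y - z‖) ^ (m + α) := by
      apply Continuous.div continuous_const
      · apply Continuous.rpow_const
        · exact continuous_const.add (continuous_id.sub continuous_const).norm
        · intro p; left
          exact (add_pos_of_pos_of_nonneg ht (norm_nonneg _)).ne'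
      · intro p
        exact (Real.rpow_pos_of_pos (add_pos_of_pos_of_nonneg ht (norm_nonneg _)) _).ne'
    exact (ENNReal.continuous_ofReal.comp hc).measurable
  -- Step 1: pointwise bound by Θ
  have hΘ1 : ∀ y : Fin n → ℝ, (‖∫ z, s t y z * f z ∂μ‖₊ : ℝ≥0∞) ≤
      ∫⁻ z, ENNReal.ofReal (C * t ^ α / (t + ‖y - z‖) ^ (m + α)) * ‖f z‖₊ ∂μ := by
    intro y
    refine (enorm_integral_le_lintegral_enorm _).trans (lintegral_mono fun z => ?_)
    rw [enorm_mul]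
    apply mul_le_mul_left
    rw [← ofReal_norm]
    exact ENNReal.ofReal_le_ofReal (hs t y z ht)
  -- Step 2: Θ bound via maximal function
  have hΘ2 : ∀ y : Fin n → ℝ,
      (∫⁻ z, ENNReal.ofReal (C * t ^ α / (t + ‖y - z‖) ^ (m + α)) * ‖f z‖₊ ∂μ) ≤
      ENNReal.ofReal (((t + ‖x - y‖) / t) ^ m) * (K₁ * M) := by
    intro y
    have hker : ∀ z : Fin n → ℝ, C * t ^ α / (t + ‖y - z‖) ^ (m + α) ≤
        (2 ^ (m + α) * (((t + ‖x - y‖) / t) ^ m * (C * (t + ‖x - y‖) ^ (-m)))) *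
          (((t + ‖x - y‖) / ((t + ‖x - y‖) + ‖x - z‖)) ^ (m + α)) := by
      intro z
      have h1 := SqAux.ker_transfer (C := C) (m := m) (α := α) (t := t)
        (A := ‖y - z‖) (B := ‖x - y‖) (E := ‖x - z‖) hC.le hm.le hα0.le ht
        (norm_nonneg _) (norm_nonneg _) (norm_nonneg _)
        (by
          calc ‖x - z‖ = ‖(x - y) + (y - z)‖ := by abel_nf
            _ ≤ ‖x - y‖ + ‖y - z‖ := norm_add_le _ _)
      refine h1.trans (le_of_eq ?_)
      have h2 := SqAux.frac_id (hT y) (norm_nonneg (x - z)) m α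
      linear_combination (2 ^ (m + α) * (((t + ‖x - y‖) / t) ^ m) * C) * h2
    calc (∫⁻ z, ENNReal.ofReal (C * t ^ α / (t + ‖y - z‖) ^ (m + α)) * ‖f z‖₊ ∂μ)
        ≤ ∫⁻ z, ENNReal.ofReal (2 ^ (m + α) * (((t + ‖x - y‖) / t) ^ m *
            (C * (t + ‖x - y‖) ^ (-m)))) *
            (ENNReal.ofReal ((((t + ‖x - y‖) / ((t + ‖x - y‖) + ‖x - z‖)) ^ (m + α))) *
              ‖f z‖₊) ∂μ := by
          apply lintegral_mono
          intro z
          dsimp only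
          rw [← mul_assoc, ← ENNReal.ofReal_mul (by positivity)]
          exact mul_le_mul_left (ENNReal.ofReal_le_ofReal (hker z)) _
      _ = ENNReal.ofReal (2 ^ (m + α) * (((t + ‖x - y‖) / t) ^ m *
            (C * (t + ‖x - y‖) ^ (-m)))) *
            ∫⁻ z, ENNReal.ofReal ((((t + ‖x - y‖) / ((t + ‖x - y‖) + ‖x - z‖)) ^ (m + α))) *
              ‖f z‖₊ ∂μ :=
          lintegral_const_mul' _ _ ENNReal.ofReal_ne_top
      _ ≤ ENNReal.ofReal (2 ^ (m + α) * (((t + ‖x - y‖) / t) ^ m *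
            (C * (t + ‖x - y‖) ^ (-m)))) *
            (ENNReal.ofReal (C * 2 ^ m * (t + ‖x - y‖) ^ m) * SqAux.Kg α * M) :=
          mul_le_mul_right
            (SqAux.lemA μ C m α (t + ‖x - y‖) hC hm hα0 (hT y) hμ f hfm x) _
      _ = ENNReal.ofReal (((t + ‖x - y‖) / t) ^ m) * (K₁ * M) := by
          have hTm : ((t + ‖x - y‖) : ℝ) ^ (-m) * (t + ‖x - y‖) ^ m = 1 := by
            rw [← Real.rpow_add (hT y)]; simp
          have hreal : (2 ^ (m + α) * (((t + ‖x - y‖) / t) ^ m *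
              (C * (t + ‖x - y‖) ^ (-m)))) * (C * 2 ^ m * (t + ‖x - y‖) ^ m)
              = (((t + ‖x - y‖) / t) ^ m) * ((2:ℝ) ^ (m+α) * C^2 * 2^m) := by
            linear_combination (2 ^ (m + α) * (((t + ‖x - y‖) / t) ^ m) * C^2 * 2^m) * hTm
          calc ENNReal.ofReal (2 ^ (m + α) * (((t + ‖x - y‖) / t) ^ m *
                (C * (t + ‖x - y‖) ^ (-m)))) *
                (ENNReal.ofReal (C * 2 ^ m * (t + ‖x - y‖) ^ m) * SqAux.Kg α * M)
              = ENNReal.ofReal ((2 ^ (m + α) * (((t + ‖x - y‖) / t) ^ m *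
                  (C * (t + ‖x - y‖) ^ (-m)))) * (C * 2 ^ m * (t + ‖x - y‖) ^ m)) *
                (SqAux.Kg α * M) := by
                conv_rhs => rw [ENNReal.ofReal_mul (show (0:ℝ) ≤ 2 ^ (m + α) *
                  (((t + ‖x - y‖) / t) ^ m * (C * (t + ‖x - y‖) ^ (-m))) by positivity)]
                ring
            _ = ENNReal.ofReal ((((t + ‖x - y‖) / t) ^ m) *
                  ((2:ℝ) ^ (m+α) * C^2 * 2^m)) * (SqAux.Kg α * M) := by rw [hreal]
            _ = ENNReal.ofReal (((t + ‖x - y‖) / t) ^ m) * (K₁ * M) := by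
                conv_lhs => rw [ENNReal.ofReal_mul (show (0:ℝ) ≤
                  (((t + ‖x - y‖) / t) ^ m) by positivity)]
                rw [hK₁def]; ring
  -- Step 3: localized weight absorbs the (T/t)^m loss
  have hPQ : ∀ y : Fin n → ℝ,
      ENNReal.ofReal ((t / (t + ‖x - y‖)) ^ (m * lam)) *
        ENNReal.ofReal (((t + ‖x - y‖) / t) ^ m) =
      ENNReal.ofReal ((t / (t + ‖x - y‖)) ^ (m + β)) := by
    intro y
    rw [← ENNReal.ofReal_mul (by positivity)]
    congr 1
    have hu : 0 < t / (t + ‖x - y‖) := div_pos ht (hT y)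
    rw [show (t + ‖x - y‖) / t = (t / (t + ‖x - y‖))⁻¹ by rw [inv_div],
      Real.inv_rpow hu.le, ← Real.rpow_neg hu.le, ← Real.rpow_add hu]
    congr 1
    rw [hβdef]; ring
  -- Step 4: main integral bound, part 1
  have hI : (∫⁻ y, ENNReal.ofReal ((t / (t + ‖x - y‖)) ^ (m * lam)) *
        (‖∫ z, s t y z * f z ∂μ‖₊ : ℝ≥0∞) ^ 2 ∂μ) ≤
      (K₁ * M) * ∫⁻ y, ENNReal.ofReal ((t / (t + ‖x - y‖)) ^ (m + β)) *
        (∫⁻ z, ENNReal.ofReal (C * t ^ α / (t + ‖y - z‖) ^ (m + α)) * ‖f z‖₊ ∂μ) ∂μ := by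
    rw [← lintegral_const_mul' _ _ hK₁M]
    apply lintegral_mono
    intro y
    calc ENNReal.ofReal ((t / (t + ‖x - y‖)) ^ (m * lam)) *
          (‖∫ z, s t y z * f z ∂μ‖₊ : ℝ≥0∞) ^ 2
        ≤ ENNReal.ofReal ((t / (t + ‖x - y‖)) ^ (m * lam)) *
            ((ENNReal.ofReal (((t + ‖x - y‖) / t) ^ m) * (K₁ * M)) *
              (∫⁻ z, ENNReal.ofReal (C * t ^ α / (t + ‖y - z‖) ^ (m + α)) * ‖f z‖₊ ∂μ)) := by
          apply mul_le_mul_right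
          rw [pow_two]
          exact mul_le_mul' ((hΘ1 y).trans (hΘ2 y)) (hΘ1 y)
      _ = (ENNReal.ofReal ((t / (t + ‖x - y‖)) ^ (m * lam)) *
            ENNReal.ofReal (((t + ‖x - y‖) / t) ^ m)) * ((K₁ * M) *
              (∫⁻ z, ENNReal.ofReal (C * t ^ α / (t + ‖y - z‖) ^ (m + α)) * ‖f z‖₊ ∂μ)) := by
          ring
      _ = (K₁ * M) * (ENNReal.ofReal ((t / (t + ‖x - y‖)) ^ (m + β)) *
            (∫⁻ z, ENNReal.ofReal (C * t ^ α / (t + ‖y - z‖) ^ (m + α)) * ‖f z‖₊ ∂μ)) := by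
          rw [hPQ y]; ring
  -- Step 5: Tonelli swap
  have hswap : (∫⁻ y, ENNReal.ofReal ((t / (t + ‖x - y‖)) ^ (m + β)) *
        (∫⁻ z, ENNReal.ofReal (C * t ^ α / (t + ‖y - z‖) ^ (m + α)) * ‖f z‖₊ ∂μ) ∂μ)
      = ∫⁻ z, (∫⁻ y, ENNReal.ofReal ((t / (t + ‖x - y‖)) ^ (m + β)) *
          ENNReal.ofReal (C * t ^ α / (t + ‖y - z‖) ^ (m + α)) ∂μ) * ‖f z‖₊ ∂μ := by
    have hF : AEMeasurable (Function.uncurry fun y z : Fin n → ℝ =>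
        ENNReal.ofReal ((t / (t + ‖x - y‖)) ^ (m + β)) *
          (ENNReal.ofReal (C * t ^ α / (t + ‖y - z‖) ^ (m + α)) * (‖f z‖₊ : ℝ≥0∞)))
        (μ.prod μ) := by
      refine AEMeasurable.mul (f := fun p : (Fin n → ℝ) × (Fin n → ℝ) =>
          ENNReal.ofReal ((t / (t + ‖x - p.1‖)) ^ (m + β)))
        (g := fun p : (Fin n → ℝ) × (Fin n → ℝ) =>
          ENNReal.ofReal (C * t ^ α / (t + ‖p.1 - p.2‖) ^ (m + α)) * (‖f p.2‖₊ : ℝ≥0∞)) ?_ ?_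
      · exact (hPm.comp measurable_fst).aemeasurable
      · exact hqm.aemeasurable.mul hfm.comp_snd
    have h1 : ∀ y : Fin n → ℝ, ENNReal.ofReal ((t / (t + ‖x - y‖)) ^ (m + β)) *
        (∫⁻ z, ENNReal.ofReal (C * t ^ α / (t + ‖y - z‖) ^ (m + α)) * ‖f z‖₊ ∂μ)
        = ∫⁻ z, ENNReal.ofReal ((t / (t + ‖x - y‖)) ^ (m + β)) *
            (ENNReal.ofReal (C * t ^ α / (t + ‖y - z‖) ^ (m + α)) * ‖f z‖₊) ∂μ :=
      fun y => (lintegral_const_mul' _ _ ENNReal.ofReal_ne_top).symm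
    simp_rw [h1]
    rw [lintegral_lintegral_swap hF]
    congr 1
    ext z
    simp_rw [← mul_assoc]
    exact lintegral_mul_const' _ _ ENNReal.coe_ne_top
  -- Step 6: the convolution bound
  have hG : ∀ z : Fin n → ℝ,
      (∫⁻ y, ENNReal.ofReal ((t / (t + ‖x - y‖)) ^ (m + β)) *
        ENNReal.ofReal (C * t ^ α / (t + ‖y - z‖) ^ (m + α)) ∂μ) ≤
      K₂ * ENNReal.ofReal ((t / (t + ‖x - z‖)) ^ (m + α)) := by
    intro z
    have hDz : (0:ℝ) ≤ ‖x - z‖ := norm_nonneg _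
    have hpt : ∀ y : Fin n → ℝ,
        ENNReal.ofReal ((t / (t + ‖x - y‖)) ^ (m + β)) *
          ENNReal.ofReal (C * t ^ α / (t + ‖y - z‖) ^ (m + α)) ≤
        ENNReal.ofReal (2 ^ (m + β) * (t / (t + ‖x - z‖)) ^ (m + α)) *
          ENNReal.ofReal (C * t ^ α / (t + ‖y - z‖) ^ (m + α)) +
        ENNReal.ofReal (C * 2 ^ (m + α) * (t ^ α / (t + ‖x - z‖) ^ (m + α))) *
          ENNReal.ofReal ((t / (t + ‖x - y‖)) ^ (m + β)) := by
      intro y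
      have htri : ‖x - z‖ ≤ ‖x - y‖ + ‖y - z‖ := by
        calc ‖x - z‖ = ‖(x - y) + (y - z)‖ := by abel_nf
          _ ≤ _ := norm_add_le _ _
      rcases le_or_gt (‖x - z‖ / 2) ‖x - y‖ with hc1 | hc2
      · exact le_trans (mul_le_mul_left (ENNReal.ofReal_le_ofReal
          (SqAux.case1_bound ht hDz (norm_nonneg _) hc1 hm.le hα0.le hαβ)) _) le_self_add
      · have hc2' : ‖x - z‖ / 2 ≤ ‖y - z‖ := by linarith
        refine le_trans ?_ le_add_self
        calc ENNReal.ofReal ((t / (t + ‖x - y‖)) ^ (m + β)) *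
              ENNReal.ofReal (C * t ^ α / (t + ‖y - z‖) ^ (m + α))
            ≤ ENNReal.ofReal ((t / (t + ‖x - y‖)) ^ (m + β)) *
              ENNReal.ofReal (C * 2 ^ (m + α) * (t ^ α / (t + ‖x - z‖) ^ (m + α))) :=
              mul_le_mul_right (ENNReal.ofReal_le_ofReal
                (SqAux.case2_bound hC.le ht hDz hc2' hm.le hα0.le)) _
          _ = _ := mul_comm _ _
    have h3 : t ^ (-m) * t ^ m = (1:ℝ) := by
      rw [← Real.rpow_add ht]; simp
    have hQz : ∫⁻ y, ENNReal.ofReal (C * t ^ α / (t + ‖y - z‖) ^ (m + α)) ∂μ ≤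
        ENNReal.ofReal (C ^ 2 * 2 ^ m) * SqAux.Kg α := by
      have hid : ∀ y : Fin n → ℝ, C * t ^ α / (t + ‖y - z‖) ^ (m + α)
          = (C * t ^ (-m)) * ((t / (t + ‖z - y‖)) ^ (m + α)) := by
        intro y
        have h2 := SqAux.frac_id ht (norm_nonneg (z - y)) m α
        rw [norm_sub_rev y z]
        linear_combination C * h2
      simp_rw [hid, ENNReal.ofReal_mul (show (0:ℝ) ≤ C * t ^ (-m) by positivity)]
      rw [lintegral_const_mul' _ _ ENNReal.ofReal_ne_top]
      calc ENNReal.ofReal (C * t ^ (-m)) *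
            ∫⁻ y, ENNReal.ofReal ((t / (t + ‖z - y‖)) ^ (m + α)) ∂μ
          ≤ ENNReal.ofReal (C * t ^ (-m)) *
              (ENNReal.ofReal (C * 2 ^ m * t ^ m) * SqAux.Kg α) :=
            mul_le_mul_right (SqAux.lemB μ C m α t hC hm hα0 ht hμ z) _
        _ = ENNReal.ofReal (C ^ 2 * 2 ^ m) * SqAux.Kg α := by
            rw [← mul_assoc, ← ENNReal.ofReal_mul (by positivity)]
            have h5 : (C * t ^ (-m)) * (C * 2 ^ m * t ^ m) = C ^ 2 * 2 ^ m := by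
              linear_combination (C ^ 2 * 2 ^ m) * h3
            rw [h5]
    have hPz : ∫⁻ y, ENNReal.ofReal ((t / (t + ‖x - y‖)) ^ (m + β)) ∂μ ≤
        ENNReal.ofReal (C * 2 ^ m * t ^ m) * SqAux.Kg β :=
      SqAux.lemB μ C m β t hC hm hβ ht hμ x
    calc (∫⁻ y, ENNReal.ofReal ((t / (t + ‖x - y‖)) ^ (m + β)) *
          ENNReal.ofReal (C * t ^ α / (t + ‖y - z‖) ^ (m + α)) ∂μ)
        ≤ ∫⁻ y, (ENNReal.ofReal (2 ^ (m + β) * (t / (t + ‖x - z‖)) ^ (m + α)) *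
            ENNReal.ofReal (C * t ^ α / (t + ‖y - z‖) ^ (m + α)) +
          ENNReal.ofReal (C * 2 ^ (m + α) * (t ^ α / (t + ‖x - z‖) ^ (m + α))) *
            ENNReal.ofReal ((t / (t + ‖x - y‖)) ^ (m + β))) ∂μ := lintegral_mono hpt
      _ = (∫⁻ y, ENNReal.ofReal (2 ^ (m + β) * (t / (t + ‖x - z‖)) ^ (m + α)) *
            ENNReal.ofReal (C * t ^ α / (t + ‖y - z‖) ^ (m + α)) ∂μ) +
          ∫⁻ y, ENNReal.ofReal (C * 2 ^ (m + α) * (t ^ α / (t + ‖x - z‖) ^ (m + α))) *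
            ENNReal.ofReal ((t / (t + ‖x - y‖)) ^ (m + β)) ∂μ :=
        lintegral_add_left ((hqym z).const_mul _) _
      _ = ENNReal.ofReal (2 ^ (m + β) * (t / (t + ‖x - z‖)) ^ (m + α)) *
            (∫⁻ y, ENNReal.ofReal (C * t ^ α / (t + ‖y - z‖) ^ (m + α)) ∂μ) +
          ENNReal.ofReal (C * 2 ^ (m + α) * (t ^ α / (t + ‖x - z‖) ^ (m + α))) *
            ∫⁻ y, ENNReal.ofReal ((t / (t + ‖x - y‖)) ^ (m + β)) ∂μ := by
        rw [lintegral_const_mul' _ _ ENNReal.ofReal_ne_top,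
          lintegral_const_mul' _ _ ENNReal.ofReal_ne_top]
      _ ≤ ENNReal.ofReal (2 ^ (m + β) * (t / (t + ‖x - z‖)) ^ (m + α)) *
            (ENNReal.ofReal (C ^ 2 * 2 ^ m) * SqAux.Kg α) +
          ENNReal.ofReal (C * 2 ^ (m + α) * (t ^ α / (t + ‖x - z‖) ^ (m + α))) *
            (ENNReal.ofReal (C * 2 ^ m * t ^ m) * SqAux.Kg β) :=
        add_le_add (mul_le_mul_right hQz _) (mul_le_mul_right hPz _)
      _ = (ENNReal.ofReal (2 ^ (m + β) * (C ^ 2 * 2 ^ m)) * SqAux.Kg α) *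
            ENNReal.ofReal ((t / (t + ‖x - z‖)) ^ (m + α)) +
          (ENNReal.ofReal (C ^ 2 * 2 ^ (m + α) * 2 ^ m) * SqAux.Kg β) *
            ENNReal.ofReal ((t / (t + ‖x - z‖)) ^ (m + α)) := by
        congr 1
        · rw [ENNReal.ofReal_mul (show (0:ℝ) ≤ (2:ℝ) ^ (m + β) by positivity),
            ENNReal.ofReal_mul (show (0:ℝ) ≤ (2:ℝ) ^ (m + β) by positivity)]
          ac_rfl
        · have h2 := SqAux.frac_id ht hDz m α
          have h4 : (C * 2 ^ (m + α) * (t ^ α / (t + ‖x - z‖) ^ (m + α))) *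
              (C * 2 ^ m * t ^ m)
              = (C ^ 2 * 2 ^ (m + α) * 2 ^ m) * ((t / (t + ‖x - z‖)) ^ (m + α)) := by
            linear_combination ((C ^ 2 * 2 ^ (m + α) * 2 ^ m) * t ^ m) * h2 +
              ((C ^ 2 * 2 ^ (m + α) * 2 ^ m) * ((t / (t + ‖x - z‖)) ^ (m + α))) * h3
          calc ENNReal.ofReal (C * 2 ^ (m + α) * (t ^ α / (t + ‖x - z‖) ^ (m + α))) *
                (ENNReal.ofReal (C * 2 ^ m * t ^ m) * SqAux.Kg β)
              = ENNReal.ofReal ((C * 2 ^ (m + α) * (t ^ α / (t + ‖x - z‖) ^ (m + α))) *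
                  (C * 2 ^ m * t ^ m)) * SqAux.Kg β := by
                rw [ENNReal.ofReal_mul (show (0:ℝ) ≤
                  C * 2 ^ (m + α) * (t ^ α / (t + ‖x - z‖) ^ (m + α)) by positivity)]
                ac_rfl
            _ = ENNReal.ofReal ((C ^ 2 * 2 ^ (m + α) * 2 ^ m) *
                  ((t / (t + ‖x - z‖)) ^ (m + α))) * SqAux.Kg β := by rw [h4]
            _ = (ENNReal.ofReal (C ^ 2 * 2 ^ (m + α) * 2 ^ m) * SqAux.Kg β) *
                  ENNReal.ofReal ((t / (t + ‖x - z‖)) ^ (m + α)) := by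
                rw [ENNReal.ofReal_mul (show (0:ℝ) ≤ C ^ 2 * 2 ^ (m + α) * 2 ^ m by positivity)]
                ac_rfl
      _ = K₂ * ENNReal.ofReal ((t / (t + ‖x - z‖)) ^ (m + α)) := by
        rw [hK₂def, add_mul]
  -- Step 7: conclude J bound
  have hJ : (∫⁻ z, (∫⁻ y, ENNReal.ofReal ((t / (t + ‖x - y‖)) ^ (m + β)) *
        ENNReal.ofReal (C * t ^ α / (t + ‖y - z‖) ^ (m + α)) ∂μ) * ‖f z‖₊ ∂μ) ≤
      K₂ * (ENNReal.ofReal (C * 2 ^ m * t ^ m) * SqAux.Kg α * M) := by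
    calc (∫⁻ z, (∫⁻ y, ENNReal.ofReal ((t / (t + ‖x - y‖)) ^ (m + β)) *
          ENNReal.ofReal (C * t ^ α / (t + ‖y - z‖) ^ (m + α)) ∂μ) * ‖f z‖₊ ∂μ)
        ≤ ∫⁻ z, K₂ * (ENNReal.ofReal ((t / (t + ‖x - z‖)) ^ (m + α)) * ‖f z‖₊) ∂μ := by
          apply lintegral_mono
          intro z
          dsimp only
          rw [← mul_assoc]
          exact mul_le_mul_left (hG z) _
      _ = K₂ * ∫⁻ z, ENNReal.ofReal ((t / (t + ‖x - z‖)) ^ (m + α)) * ‖f z‖₊ ∂μ :=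
          lintegral_const_mul' _ _ hK₂top
      _ ≤ K₂ * (ENNReal.ofReal (C * 2 ^ m * t ^ m) * SqAux.Kg α * M) :=
          mul_le_mul_right (SqAux.lemA μ C m α t hC hm hα0 ht hμ f hfm x) _
  -- Final assembly
  have htm0 : ENNReal.ofReal (t ^ m) ≠ 0 :=
    (ENNReal.ofReal_pos.2 (Real.rpow_pos_of_pos ht m)).ne'
  have hfinal : (∫⁻ y, ENNReal.ofReal ((t / (t + ‖x - y‖)) ^ (m * lam)) *
        (‖∫ z, s t y z * f z ∂μ‖₊ : ℝ≥0∞) ^ 2 ∂μ) *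
        (ENNReal.ofReal (t ^ m))⁻¹ ≤ K₃ * (M * M) := by
    have hIJ : (∫⁻ y, ENNReal.ofReal ((t / (t + ‖x - y‖)) ^ (m * lam)) *
        (‖∫ z, s t y z * f z ∂μ‖₊ : ℝ≥0∞) ^ 2 ∂μ) ≤
        (K₁ * M) * (K₂ * (ENNReal.ofReal (C * 2 ^ m * t ^ m) * SqAux.Kg α * M)) :=
      hI.trans (by rw [hswap]; exact mul_le_mul_right hJ _)
    have hsplit : ENNReal.ofReal (C * 2 ^ m * t ^ m)
        = ENNReal.ofReal (C * 2 ^ m) * ENNReal.ofReal (t ^ m) :=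
      ENNReal.ofReal_mul (by positivity)
    calc (∫⁻ y, ENNReal.ofReal ((t / (t + ‖x - y‖)) ^ (m * lam)) *
          (‖∫ z, s t y z * f z ∂μ‖₊ : ℝ≥0∞) ^ 2 ∂μ) * (ENNReal.ofReal (t ^ m))⁻¹
        ≤ ((K₁ * M) * (K₂ * (ENNReal.ofReal (C * 2 ^ m) * ENNReal.ofReal (t ^ m) *
            SqAux.Kg α * M))) * (ENNReal.ofReal (t ^ m))⁻¹ := by
          rw [← hsplit]
          exact mul_le_mul_left hIJ _
      _ = (K₃ * (M * M)) * (ENNReal.ofReal (t ^ m) * (ENNReal.ofReal (t ^ m))⁻¹) := by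
          rw [hK₃def]; ring
      _ = K₃ * (M * M) := by
          rw [ENNReal.mul_inv_cancel htm0 ENNReal.ofReal_ne_top, mul_one]
  calc ((∫⁻ y, ENNReal.ofReal ((t / (t + ‖x - y‖)) ^ (m * lam)) *
        (‖∫ z, s t y z * f z ∂μ‖₊ : ℝ≥0∞) ^ 2 ∂μ) *
        (ENNReal.ofReal (t ^ m))⁻¹) ^ (1 / 2 : ℝ)
      ≤ (K₃ * (M * M)) ^ (1 / 2 : ℝ) := ENNReal.rpow_le_rpow hfinal (by norm_num)
    _ = K₃ ^ (1 / 2 : ℝ) * (M * M) ^ (1 / 2 : ℝ) :=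
        ENNReal.mul_rpow_of_nonneg _ _ (by norm_num)
    _ = K₃ ^ (1 / 2 : ℝ) * M := by
        congr 1
        have hMM : M * M = M ^ ((2:ℕ) : ℝ) := by rw [ENNReal.rpow_natCast]; ring
        rw [hMM, ← ENNReal.rpow_mul]
        norm_num
    _ ≤ ENNReal.ofReal ((K₃ ^ (1/2:ℝ)).toReal + 1) * M := mul_le_mul_left hKC' M
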